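/- Let μ̂(n) = π√n and define s⁽¹⁾₊(n) = 1 + 1/(2n) + 1/(2π n^{3/2}) + (1/(2π²) − 1/8)/n² + (1/(2π³) − 1/(8π))/n^{5/2} + (1/16 + 1/(2π⁴) − 1/(8π²))/n³ + (1/(2π⁵) − 1/(8π³) + 1/(16π))/n^{7/2}. Then for all integers n ≥ 1, s⁽¹⁾₊(n) − 2/n⁴ < (μ̂(n+1) − 1)/(μ̂(n) − 1) < s⁽¹⁾₊(n) + 2/n⁴. -/

import Mathlib

open Real
set_option maxHeartbeats 1000000

lemma key_aux_stmt11 (x q v : ℝ) (hx0 : 0 < x) (hx1 : x ≤ 1)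
    (hq0 : 0.317 ≤ q) (hq1 : q ≤ 0.319)
    (hv1 : 1 ≤ v) (hv2 : v ^ 2 = 1 + x ^ 2) :
    ((1 + x^2/2 + q*x^3/2 + (q^2/2 - 1/8)*x^4 + (q^3/2 - q/8)*x^5
      + (1/16 + q^4/2 - q^2/8)*x^6 + (q^5/2 - q^3/8 + q/16)*x^7) - 2*x^8) * (1 - q*x)
      < v - q*x ∧
    v - q*x <
    ((1 + x^2/2 + q*x^3/2 + (q^2/2 - 1/8)*x^4 + (q^3/2 - q/8)*x^5
      + (1/16 + q^4/2 - q^2/8)*x^6 + (q^5/2 - q^3/8 + q/16)*x^7) + 2*x^8) * (1 - q*x) := by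
  obtain ⟨S, hS⟩ : ∃ S : ℝ, S = 1 + x^2/2 + q*x^3/2 + (q^2/2 - 1/8)*x^4 + (q^3/2 - q/8)*x^5
      + (1/16 + q^4/2 - q^2/8)*x^6 + (q^5/2 - q^3/8 + q/16)*x^7 := ⟨_, rfl⟩
  rw [← hS]
  obtain ⟨P, hPdef⟩ : ∃ P : ℝ, P = S * (1 - q*x) + q*x := ⟨_, rfl⟩
  obtain ⟨G, hGdef⟩ : ∃ G : ℝ, G = (-5/64 + q^2/8 - q^4/4 + q^6)
      + (1/64 + q^2/16 - q^4/8 + q^6/2) * x^2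
      + (-1/256 - q^2/64 + q^4/32 - q^6/8) * x^4
      + (q^2/128 - q^4/64 + q^6/16) * x^6
      + (-q^4/256 + q^6/64 - 5*q^8/64 + q^10/8 - q^12/4) * x^8 := ⟨_, rfl⟩
  have hq0' : (0:ℝ) < q := by linarith
  have hx2 : x^2 ≤ 1 := pow_le_one₀ hx0.le hx1
  have hx4 : x^4 ≤ 1 := pow_le_one₀ hx0.le hx1
  have hx6 : x^6 ≤ 1 := pow_le_one₀ hx0.le hx1
  have hx8 : x^8 ≤ 1 := pow_le_one₀ hx0.le hx1
  have hx0' : (0:ℝ) ≤ x^2 := by positivity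
  have hx4' : (0:ℝ) ≤ x^4 := by positivity
  have hx6' : (0:ℝ) ≤ x^6 := by positivity
  have hx8' : (0:ℝ) < x^8 := by positivity
  have hx42 : x^4 ≤ x^2 := pow_le_pow_of_le_one hx0.le hx1 (by norm_num)
  have hx52 : x^5 ≤ x^2 := pow_le_pow_of_le_one hx0.le hx1 (by norm_num)
  have hq2u : q^2 ≤ 0.102 := le_trans (pow_le_pow_left₀ hq0'.le hq1 2) (by norm_num)
  have hq2l : 0.1 ≤ q^2 := le_trans (by norm_num) (pow_le_pow_left₀ (by norm_num) hq0 2)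
  have hq4u : q^4 ≤ 0.0105 := le_trans (pow_le_pow_left₀ hq0'.le hq1 4) (by norm_num)
  have hq4l : (0:ℝ) ≤ q^4 := by positivity
  have hq6u : q^6 ≤ 0.0011 := le_trans (pow_le_pow_left₀ hq0'.le hq1 6) (by norm_num)
  have hq6l : (0:ℝ) ≤ q^6 := by positivity
  have hq8u : q^8 ≤ 0.00012 := le_trans (pow_le_pow_left₀ hq0'.le hq1 8) (by norm_num)
  have hq10u : q^10 ≤ 0.000013 := le_trans (pow_le_pow_left₀ hq0'.le hq1 10) (by norm_num)
  have hq12u : q^12 ≤ 0.0000014 := le_trans (pow_le_pow_left₀ hq0'.le hq1 12) (by norm_num)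
  have hq8l : (0:ℝ) ≤ q^8 := by positivity
  have hq10l : (0:ℝ) ≤ q^10 := by positivity
  have hq12l : (0:ℝ) ≤ q^12 := by positivity
  -- coefficient group bounds (all linear in the powers)
  have hA0u : (-5/64 + q^2/8 - q^4/4 + q^6 : ℝ) ≤ 0 := by linarith only [hq2u, hq4l, hq6u]
  have hA0l : (-0.08 : ℝ) ≤ -5/64 + q^2/8 - q^4/4 + q^6 := by linarith only [hq2l, hq4u, hq6l]
  have hA2u : (1/64 + q^2/16 - q^4/8 + q^6/2 : ℝ) ≤ 0.03 := by linarith only [hq2u, hq4l, hq6u]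
  have hA2l : (0:ℝ) ≤ 1/64 + q^2/16 - q^4/8 + q^6/2 := by linarith only [hq2l, hq4u, hq6l]
  have hA4u : (-1/256 - q^2/64 + q^4/32 - q^6/8 : ℝ) ≤ 0 := by linarith only [hq2l, hq4u, hq6l]
  have hA4l : (-0.01:ℝ) ≤ -1/256 - q^2/64 + q^4/32 - q^6/8 := by linarith only [hq2u, hq4l, hq6u]
  have hA6u : (q^2/128 - q^4/64 + q^6/16 : ℝ) ≤ 0.001 := by linarith only [hq2u, hq4l, hq6u]
  have hA6l : (0:ℝ) ≤ q^2/128 - q^4/64 + q^6/16 := by linarith only [hq2l, hq4u, hq6l]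
  have hA8u : (-q^4/256 + q^6/64 - 5*q^8/64 + q^10/8 - q^12/4 : ℝ) ≤ 0.001 := by linarith only [hq4l, hq6u, hq8l, hq10u, hq12l]
  have hA8l : (-0.001:ℝ) ≤ -q^4/256 + q^6/64 - 5*q^8/64 + q^10/8 - q^12/4 := by linarith only [hq4u, hq6l, hq8u, hq10l, hq12u]
  -- product bounds
  have hB2u := mul_le_mul hA2u hx2 hx0' (by norm_num : (0:ℝ) ≤ 0.03)
  have hB2l := mul_nonneg hA2l hx0'
  have hB4u := mul_nonpos_of_nonpos_of_nonneg hA4u hx4'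
  have hB4l := mul_le_mul_of_nonpos_left hx4 hA4u
  have hB6u := mul_le_mul hA6u hx6 hx6' (by norm_num : (0:ℝ) ≤ 0.001)
  have hB6l := mul_nonneg hA6l hx6'
  have hB8u := mul_le_mul hA8u hx8 hx8'.le (by norm_num : (0:ℝ) ≤ 0.001)
  have hB8l := mul_le_mul_of_nonneg_right hA8l hx8'.le
  have hGu : G ≤ 1 := by rw [hGdef]; linarith only [hA0u, hB2u, hB4u, hB6u, hB8u]
  have hGl : -1 ≤ G := by rw [hGdef]; linarith only [hA0l, hA4l, hB2l, hB4l, hB6l, hB8l, hx8]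
  have hD : 1 + x^2 - P^2 = x^8 * G := by rw [hPdef, hS, hGdef]; ring
  have hqx : q * x ≤ 0.319 := le_trans (mul_le_of_le_one_right hq0'.le hx1) hq1
  have hqx0 : 0 ≤ q * x := by positivity
  -- S ≥ 1
  have t3 : (0:ℝ) ≤ q*x^3/2 := by positivity
  have c4 : (-0.075:ℝ) ≤ q^2/2 - 1/8 := by linarith only [hq2l]
  have t4 : -(0.075) * x^2 ≤ (q^2/2 - 1/8) * x^4 := by
    have h1 := mul_le_mul_of_nonneg_right c4 hx4'
    linarith only [h1, hx42]
  have c5 : (-0.04:ℝ) ≤ q^3/2 - q/8 := by linarith only [pow_nonneg hq0'.le 3, hq1]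
  have t5 : -(0.04) * x^2 ≤ (q^3/2 - q/8) * x^5 := by
    have h1 := mul_le_mul_of_nonneg_right c5 (by positivity : (0:ℝ) ≤ x^5)
    linarith only [h1, hx52]
  have c6 : (0:ℝ) ≤ 1/16 + q^4/2 - q^2/8 := by linarith only [hq2u, hq4l]
  have t6 : (0:ℝ) ≤ (1/16 + q^4/2 - q^2/8) * x^6 := mul_nonneg c6 hx6'
  have c7 : (0:ℝ) ≤ q^5/2 - q^3/8 + q/16 := by
    have h1 := mul_le_mul_of_nonneg_left hq2u hq0'.le
    have h2 : (0:ℝ) ≤ q^5 := by positivity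
    linarith only [h1, h2, hq0]
  have t7 : (0:ℝ) ≤ (q^5/2 - q^3/8 + q/16) * x^7 := mul_nonneg c7 (by positivity)
  have hS1 : 1 ≤ S := by rw [hS]; linarith only [t3, t4, t5, t6, t7, hx0']
  have hP1 : 1 ≤ P := by
    have h := mul_nonneg (by linarith only [hS1] : (0:ℝ) ≤ S - 1) (by linarith only [hqx] : (0:ℝ) ≤ 1 - q*x)
    rw [hPdef]; linarith only [h]
  have hsum : 2 ≤ v + P := by linarith only [hv1, hP1]
  have hvP : (v - P) * (v + P) = x^8 * G := by linear_combination hD + hv2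
  have hGx1 : x^8 * G ≤ x^8 := by
    have := mul_le_mul_of_nonneg_left hGu hx8'.le; linarith only [this]
  have hGx2 : -x^8 ≤ x^8 * G := by
    have := mul_le_mul_of_nonneg_left hGl hx8'.le; linarith only [this]
  have hdu : v - P ≤ x^8 / 2 := by
    rcases le_or_gt (v - P) 0 with h | h
    · linarith only [h, hx8']
    · have h2 := mul_le_mul_of_nonneg_left hsum h.le
      linarith [h2, hvP, hGx1]
  have hdl : -(x^8/2) ≤ v - P := by
    rcases le_or_gt 0 (v - P) with h | h
    · linarith only [h, hx8']
    · have h2 := mul_le_mul_of_nonneg_left hsum (by linarith : (0:ℝ) ≤ P - v)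
      linarith [h2, hvP, hGx2]
  have hx8qx := mul_le_mul_of_nonneg_left hqx hx8'.le
  have hx8qx0 : 0 ≤ x^8 * (q*x) := by positivity
  constructor
  · have e : (S - 2*x^8) * (1 - q*x) = P - q*x - 2*x^8*(1 - q*x) := by rw [hPdef]; ring
    rw [e]
    linarith [hdl, hx8qx, hx8']
  · have e : (S + 2*x^8) * (1 - q*x) = P - q*x + 2*x^8*(1 - q*x) := by rw [hPdef]; ring
    rw [e]
    linarith [hdu, hx8qx0, hx8']

theorem stmt_11 (n : ℕ) (hn : 1 ≤ n) :
    (1 + 1 / (2 * (n : ℝ)) + 1 / (2 * Real.pi * (n : ℝ) ^ ((3 : ℝ) / 2))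
      + (1 / (2 * Real.pi ^ 2) - 1 / 8) / (n : ℝ) ^ 2
      + (1 / (2 * Real.pi ^ 3) - 1 / (8 * Real.pi)) / (n : ℝ) ^ ((5 : ℝ) / 2)
      + (1 / 16 + 1 / (2 * Real.pi ^ 4) - 1 / (8 * Real.pi ^ 2)) / (n : ℝ) ^ 3
      + (1 / (2 * Real.pi ^ 5) - 1 / (8 * Real.pi ^ 3) + 1 / (16 * Real.pi)) / (n : ℝ) ^ ((7 : ℝ) / 2))
      - 2 / (n : ℝ) ^ 4
    < (Real.pi * Real.sqrt (n + 1) - 1) / (Real.pi * Real.sqrt n - 1) ∧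
    (Real.pi * Real.sqrt (n + 1) - 1) / (Real.pi * Real.sqrt n - 1)
    < (1 + 1 / (2 * (n : ℝ)) + 1 / (2 * Real.pi * (n : ℝ) ^ ((3 : ℝ) / 2))
      + (1 / (2 * Real.pi ^ 2) - 1 / 8) / (n : ℝ) ^ 2
      + (1 / (2 * Real.pi ^ 3) - 1 / (8 * Real.pi)) / (n : ℝ) ^ ((5 : ℝ) / 2)
      + (1 / 16 + 1 / (2 * Real.pi ^ 4) - 1 / (8 * Real.pi ^ 2)) / (n : ℝ) ^ 3
      + (1 / (2 * Real.pi ^ 5) - 1 / (8 * Real.pi ^ 3) + 1 / (16 * Real.pi)) / (n : ℝ) ^ ((7 : ℝ) / 2))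
      + 2 / (n : ℝ) ^ 4 := by
  have hpi1 : (3.14:ℝ) < π := Real.pi_gt_d2
  have hpi2 : π < 3.15 := Real.pi_lt_d2
  have hn0 : (0:ℝ) ≤ n := n.cast_nonneg
  have hn1 : (1:ℝ) ≤ n := by exact_mod_cast hn
  set a := Real.sqrt n with ha_def
  have ha1 : 1 ≤ a := by
    rw [ha_def, show (1:ℝ) = Real.sqrt 1 by simp]
    exact Real.sqrt_le_sqrt hn1
  have ha0 : 0 < a := by linarith
  have ha2 : a ^ 2 = n := Real.sq_sqrt hn0
  set x := a⁻¹ with hx_def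
  have hx0 : 0 < x := by positivity
  have hx1 : x ≤ 1 := by rw [hx_def]; exact inv_le_one_of_one_le₀ ha1
  set q := π⁻¹ with hq_def
  have hqpos : 0 < q := by positivity
  have hqpi : q * π = 1 := inv_mul_cancel₀ Real.pi_ne_zero
  have hq0 : 0.317 ≤ q := by nlinarith
  have hq1 : q ≤ 0.319 := by nlinarith
  set v := Real.sqrt (1 + x ^ 2) with hv_def
  have hv2 : v ^ 2 = 1 + x ^ 2 := Real.sq_sqrt (by positivity)
  have hvnn : 0 ≤ v := Real.sqrt_nonneg _
  have hv1 : 1 ≤ v := by nlinarith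
  have hax : a * x = 1 := mul_inv_cancel₀ ha0.ne'
  have hb : Real.sqrt ((n:ℝ) + 1) = a * v := by
    rw [show ((n:ℝ) + 1) = a ^ 2 * (1 + x ^ 2) by linear_combination -ha2 - (a*x+1)*hax,
      Real.sqrt_mul (by positivity), ← hv_def, Real.sqrt_sq ha0.le]
  have ek : ∀ k : ℕ, (n:ℝ) ^ ((k:ℝ)/2) = a ^ k := by
    intro k
    rw [show ((k:ℝ)/2) = (1/2 : ℝ) * (k:ℕ) by ring, Real.rpow_mul hn0,
      Real.rpow_natCast, ← Real.sqrt_eq_rpow]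
  have e3 : (n:ℝ) ^ ((3:ℝ)/2) = a ^ 3 := by have := ek 3; norm_num at this; exact this
  have e5 : (n:ℝ) ^ ((5:ℝ)/2) = a ^ 5 := by have := ek 5; norm_num at this; exact this
  have e7 : (n:ℝ) ^ ((7:ℝ)/2) = a ^ 7 := by have := ek 7; norm_num at this; exact this
  rw [hb, e3, e5, e7, ← ha2]
  have hden : 0 < π * a - 1 := by nlinarith
  have hpa : 0 < π * a := by positivity
  obtain ⟨k1, k2⟩ := key_aux_stmt11 x q v hx0 hx1 hq0 hq1 hv1 hv2
  constructor
  · rw [lt_div_iff₀ hden]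
    have h := mul_lt_mul_of_pos_left k1 hpa
    refine lt_of_le_of_lt (le_of_eq ?_) (lt_of_lt_of_le h (le_of_eq ?_))
    · rw [hx_def, hq_def]; field_simp
    · rw [hx_def, hq_def]; field_simp
  · rw [div_lt_iff₀ hden]
    have h := mul_lt_mul_of_pos_left k2 hpa
    refine lt_of_le_of_lt (le_of_eq ?_) (lt_of_lt_of_le h (le_of_eq ?_))
    · rw [hx_def, hq_def]; field_simp
    · rw [hx_def, hq_def]; field_simp
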